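/- Let Z : [1,∞) → ℝ^k be a C² vector-valued function satisfying Z''(t) = A(t)Z'(t) + B(t)Z(t), where A(t), B(t) are continuous k×k matrix-valued functions with |A(t)| + t|B(t)| ≤ C₁ t^(−1−q) for some constants C₁ > 0 and q > 0. Then there is a constant C₂, depending only on C₁, Z(1), and Z'(1), such that |Z(t)| + t|Z'(t)| ≤ C₂ t for all t ≥ 1. -/

import Mathlib

set_option maxHeartbeats 1000000 in
/-- ODE growth lemma: a C² vector-valued solution of `Z'' = A Z' + B Z` on `[1,∞)`
with `‖A t‖ + t‖B t‖ ≤ C₁ t^(-1-q)` grows at most linearly. -/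
theorem stmt_0 (k : ℕ) (Z Z' Z'' : ℝ → EuclideanSpace ℝ (Fin k))
    (A B : ℝ → (EuclideanSpace ℝ (Fin k) →L[ℝ] EuclideanSpace ℝ (Fin k)))
    (C₁ q : ℝ) (hC₁ : 0 < C₁) (hq : 0 < q)
    (hA : ContinuousOn A (Set.Ici 1)) (hB : ContinuousOn B (Set.Ici 1))
    (hZ'cont : ContinuousOn Z' (Set.Ici 1)) (hZ''cont : ContinuousOn Z'' (Set.Ici 1))
    (hderiv1 : ∀ t ∈ Set.Ici (1:ℝ), HasDerivWithinAt Z (Z' t) (Set.Ici 1) t)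
    (hderiv2 : ∀ t ∈ Set.Ici (1:ℝ), HasDerivWithinAt Z' (Z'' t) (Set.Ici 1) t)
    (hode : ∀ t ∈ Set.Ici (1:ℝ), Z'' t = A t (Z' t) + B t (Z t))
    (hbound : ∀ t ∈ Set.Ici (1:ℝ), ‖A t‖ + t * ‖B t‖ ≤ C₁ * t ^ (-1 - q)) :
    ∃ C₂ : ℝ, ∀ t ∈ Set.Ici (1:ℝ), ‖Z t‖ + t * ‖Z' t‖ ≤ C₂ * t := by
  classical
  set c : ℝ := max ‖Z 1‖ ‖Z' 1‖ + 1 with hc_def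
  have hc_pos : 0 < c := by positivity
  set K : ℝ := 2 * C₁ / q with hKdef
  have hK_pos : 0 < K := by positivity
  set e : ℝ → ℝ := fun t => Real.exp (K * (1 - t ^ (-q))) with he_def
  set Bd : ℝ → ℝ := fun t => c * (t * e t) with hBd_def
  set Bd' : ℝ → ℝ := fun t => c * (e t * (1 + 2 * C₁ * t ^ (-q))) with hBd'_def
  set f : ℝ → EuclideanSpace ℝ (Fin k) × EuclideanSpace ℝ (Fin k) :=
    fun t => (Z t, t • Z' t) with hf_def
  set f' : ℝ → EuclideanSpace ℝ (Fin k) × EuclideanSpace ℝ (Fin k) :=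
    fun t => (Z' t, Z' t + t • Z'' t) with hf'_def
  have he_pos : ∀ t : ℝ, 0 < e t := fun t => Real.exp_pos _
  -- exponent identity
  have hxx : ∀ x : ℝ, 0 < x → x * x ^ (-q - 1) = x ^ (-q) := by
    intro x hx
    calc x * x ^ (-q - 1) = x ^ (1:ℝ) * x ^ (-q - 1) := by rw [Real.rpow_one]
      _ = x ^ (1 + (-q - 1)) := (Real.rpow_add hx 1 (-q - 1)).symm
      _ = x ^ (-q) := by norm_num
  -- key bound: ‖f t‖ ≤ Bd t for all t ≥ 1
  have key : ∀ T : ℝ, 1 ≤ T → ‖f T‖ ≤ Bd T := by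
    intro T hT
    have hZcont : ContinuousOn Z (Set.Icc 1 T) := fun x hx =>
      ((hderiv1 x hx.1).continuousWithinAt).mono (fun y hy => hy.1)
    have hcont : ContinuousOn f (Set.Icc 1 T) := by
      refine ContinuousOn.prodMk hZcont ?_
      exact continuousOn_id.smul (hZ'cont.mono (fun y hy => hy.1))
    have hf'deriv : ∀ x ∈ Set.Ico 1 T, HasDerivWithinAt f (f' x) (Set.Ici x) x := by
      intro x hx
      have hx1 : x ∈ Set.Ici (1:ℝ) := hx.1
      have hsub : Set.Ici x ⊆ Set.Ici (1:ℝ) := Set.Ici_subset_Ici.2 hx.1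
      have h1 : HasDerivWithinAt Z (Z' x) (Set.Ici x) x := (hderiv1 x hx1).mono hsub
      have h2 : HasDerivWithinAt Z' (Z'' x) (Set.Ici x) x := (hderiv2 x hx1).mono hsub
      have hid : HasDerivWithinAt (fun t : ℝ => t) (1:ℝ) (Set.Ici x) x :=
        (hasDerivAt_id x).hasDerivWithinAt
      have h3 : HasDerivWithinAt (fun t : ℝ => t • Z' t)
          (x • Z'' x + (1:ℝ) • Z' x) (Set.Ici x) x := hid.smul h2
      have h3' : HasDerivWithinAt (fun t : ℝ => t • Z' t)
          (Z' x + x • Z'' x) (Set.Ici x) x := by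
        convert h3 using 1
        rw [one_smul, add_comm]
      exact h1.prodMk h3'
    have hBcont : ContinuousOn Bd (Set.Icc 1 T) := by
      apply continuousOn_const.mul
      apply continuousOn_id.mul
      apply Real.continuous_exp.comp_continuousOn
      apply continuousOn_const.mul
      apply continuousOn_const.sub
      apply ContinuousOn.rpow_const continuousOn_id
      intro x hx
      exact Or.inl (ne_of_gt (lt_of_lt_of_le one_pos hx.1))
    have hBderiv : ∀ x ∈ Set.Ico 1 T, HasDerivWithinAt Bd (Bd' x) (Set.Ici x) x := by
      intro x hx
      have hx0 : (0:ℝ) < x := lt_of_lt_of_le one_pos hx.1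
      have hrp : HasDerivAt (fun t : ℝ => t ^ (-q)) (-q * x ^ (-q - 1)) x :=
        Real.hasDerivAt_rpow_const (Or.inl hx0.ne')
      have h2 : HasDerivAt (fun t : ℝ => K * (1 - t ^ (-q)))
          (K * (0 - -q * x ^ (-q - 1))) x :=
        (((hasDerivAt_const x (1:ℝ)).sub hrp)).const_mul K
      have h3 := h2.exp
      have h4 := (hasDerivAt_id x).mul h3
      have h5 := h4.const_mul c
      have heq : Bd' x = c * (1 * Real.exp (K * (1 - x ^ (-q))) +
          x * (Real.exp (K * (1 - x ^ (-q))) * (K * (0 - -q * x ^ (-q - 1))))) := by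
      -- rearrange and use K*q = 2C₁ and x * x^(-q-1) = x^(-q)
        have hKq : K * q = 2 * C₁ := by
          rw [hKdef]; field_simp
        have h6 : c * (1 * Real.exp (K * (1 - x ^ (-q))) +
            x * (Real.exp (K * (1 - x ^ (-q))) * (K * (0 - -q * x ^ (-q - 1))))) =
            c * (Real.exp (K * (1 - x ^ (-q))) * (1 + (K * q) * (x * x ^ (-q - 1)))) := by
          ring
        rw [h6, hxx x hx0, hKq]
      rw [heq]
      exact h5.hasDerivWithinAt
    have he1 : e 1 = 1 := by
      simp [he_def, Real.one_rpow]
    have ha1 : ‖f 1‖ ≤ Bd 1 := by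
      have hBd1 : Bd 1 = c := by
        show c * (1 * e 1) = c
        rw [he1]; ring
      rw [hBd1]
      show ‖((Z 1 : EuclideanSpace ℝ (Fin k)), (1:ℝ) • Z' 1)‖ ≤ c
      rw [Prod.norm_def]
      simp only [one_smul]
      apply max_le
      · calc ‖Z 1‖ ≤ max ‖Z 1‖ ‖Z' 1‖ := le_max_left _ _
          _ ≤ c := by rw [hc_def]; linarith
      · calc ‖Z' 1‖ ≤ max ‖Z 1‖ ‖Z' 1‖ := le_max_right _ _
          _ ≤ c := by rw [hc_def]; linarith
    have bound : ∀ x ∈ Set.Ico 1 T, ‖f x‖ = Bd x → ‖f' x‖ < Bd' x := by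
      intro x hx hfx
      have hx0 : (0:ℝ) < x := lt_of_lt_of_le one_pos hx.1
      have hx1 : x ∈ Set.Ici (1:ℝ) := hx.1
      have hxq : (0:ℝ) < x ^ (-q) := Real.rpow_pos_of_pos hx0 _
      have he0 : 0 < e x := he_pos x
      have hnorm_eq : ‖f x‖ = max ‖Z x‖ (x * ‖Z' x‖) := by
        show ‖((Z x : EuclideanSpace ℝ (Fin k)), x • Z' x)‖ = _
        rw [Prod.norm_def]
        simp only [norm_smul, Real.norm_eq_abs, abs_of_pos hx0]
      have hBdx : Bd x = c * (x * e x) := rfl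
      have hZle : ‖Z x‖ ≤ c * (x * e x) := by
        rw [← hBdx, ← hfx, hnorm_eq]; exact le_max_left _ _
      have hZ'le' : x * ‖Z' x‖ ≤ c * (x * e x) := by
        rw [← hBdx, ← hfx, hnorm_eq]; exact le_max_right _ _
      have hZ'le : ‖Z' x‖ ≤ c * e x := by
        have h := (mul_le_mul_iff_right₀ hx0).1 (by linarith [hZ'le'] : x * ‖Z' x‖ ≤ x * (c * e x))
        linarith
      -- second derivative bound
      have hAb : x * (‖A x‖ + x * ‖B x‖) ≤ C₁ * x ^ (-q) := by
        calc x * (‖A x‖ + x * ‖B x‖) ≤ x * (C₁ * x ^ (-1 - q)) :=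
              mul_le_mul_of_nonneg_left (hbound x hx1) hx0.le
          _ = C₁ * (x * x ^ (-q - 1)) := by rw [show (-1 - q : ℝ) = -q - 1 by ring]; ring
          _ = C₁ * x ^ (-q) := by rw [hxx x hx0]
      have hopA : ‖(A x) (Z' x)‖ ≤ ‖A x‖ * ‖Z' x‖ := (A x).le_opNorm _
      have hopB : ‖(B x) (Z x)‖ ≤ ‖B x‖ * ‖Z x‖ := (B x).le_opNorm _
      have h1 : ‖Z'' x‖ ≤ ‖A x‖ * ‖Z' x‖ + ‖B x‖ * ‖Z x‖ := by
        rw [hode x hx1]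
        exact (norm_add_le _ _).trans (add_le_add hopA hopB)
      have hZ''le : x * ‖Z'' x‖ ≤ c * e x * (C₁ * x ^ (-q)) := by
        calc x * ‖Z'' x‖ ≤ x * (‖A x‖ * ‖Z' x‖ + ‖B x‖ * ‖Z x‖) :=
              mul_le_mul_of_nonneg_left h1 hx0.le
          _ ≤ x * (‖A x‖ * (c * e x) + ‖B x‖ * (c * (x * e x))) := by
              refine mul_le_mul_of_nonneg_left ?_ hx0.le
              exact add_le_add (mul_le_mul_of_nonneg_left hZ'le (norm_nonneg _))
                (mul_le_mul_of_nonneg_left hZle (norm_nonneg _))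
          _ = (c * e x) * (x * (‖A x‖ + x * ‖B x‖)) := by ring
          _ ≤ (c * e x) * (C₁ * x ^ (-q)) :=
              mul_le_mul_of_nonneg_left hAb (by positivity)
      have hsum : ‖Z' x‖ + x * ‖Z'' x‖ ≤ c * e x * (1 + C₁ * x ^ (-q)) := by
        calc ‖Z' x‖ + x * ‖Z'' x‖ ≤ c * e x + c * e x * (C₁ * x ^ (-q)) :=
              add_le_add hZ'le hZ''le
          _ = c * e x * (1 + C₁ * x ^ (-q)) := by ring
      have hf'le : ‖f' x‖ ≤ c * e x * (1 + C₁ * x ^ (-q)) := by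
        have hfx' : ‖f' x‖ = max ‖Z' x‖ ‖Z' x + x • Z'' x‖ := by
          show ‖((Z' x : EuclideanSpace ℝ (Fin k)), Z' x + x • Z'' x)‖ = _
          rw [Prod.norm_def]
        rw [hfx']
        apply max_le
        · refine le_trans ?_ hsum
          have : 0 ≤ x * ‖Z'' x‖ := by positivity
          linarith
        · refine le_trans ?_ hsum
          refine (norm_add_le _ _).trans ?_
          rw [norm_smul, Real.norm_eq_abs, abs_of_pos hx0]
      refine lt_of_le_of_lt hf'le ?_
      have hBd'x : Bd' x = c * (e x * (1 + 2 * C₁ * x ^ (-q))) := rfl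
      rw [hBd'x]
      have hpos : 0 < c * e x := by positivity
      calc c * e x * (1 + C₁ * x ^ (-q))
          = c * e x + (c * e x) * (C₁ * x ^ (-q)) := by ring
        _ < c * e x + (c * e x) * (2 * C₁ * x ^ (-q)) := by
            have h : C₁ * x ^ (-q) < 2 * C₁ * x ^ (-q) := by nlinarith
            have h2 := mul_lt_mul_of_pos_left h hpos
            linarith
        _ = c * (e x * (1 + 2 * C₁ * x ^ (-q))) := by ring
    exact image_norm_le_of_norm_deriv_right_lt_deriv_boundary' hcont hf'deriv ha1 hBcont
      hBderiv bound (Set.right_mem_Icc.2 hT)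
  -- conclude
  refine ⟨2 * c * Real.exp K, fun t ht => ?_⟩
  have ht1 : (1:ℝ) ≤ t := ht
  have ht0 : (0:ℝ) < t := lt_of_lt_of_le one_pos ht1
  have h1 := key t ht1
  have hnorm_eq : ‖f t‖ = max ‖Z t‖ (t * ‖Z' t‖) := by
    show ‖((Z t : EuclideanSpace ℝ (Fin k)), t • Z' t)‖ = _
    rw [Prod.norm_def]
    simp only [norm_smul, Real.norm_eq_abs, abs_of_pos ht0]
  rw [hnorm_eq] at h1
  have hZle : ‖Z t‖ ≤ Bd t := le_trans (le_max_left _ _) h1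
  have hZ'le : t * ‖Z' t‖ ≤ Bd t := le_trans (le_max_right _ _) h1
  have heK : e t ≤ Real.exp K := by
    apply Real.exp_le_exp.2
    have h : (0:ℝ) ≤ t ^ (-q) := Real.rpow_nonneg ht0.le _
    have h2 := mul_le_mul_of_nonneg_left (by linarith : (1:ℝ) - t ^ (-q) ≤ 1) hK_pos.le
    linarith
  have hBdle : Bd t ≤ c * Real.exp K * t := by
    have hBdt : Bd t = c * (t * e t) := rfl
    rw [hBdt]
    calc c * (t * e t) ≤ c * (t * Real.exp K) := by gcongr
      _ = c * Real.exp K * t := by ring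
  linarith [hZle.trans hBdle, hZ'le.trans hBdle]
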